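/- Let C be an (N,v,t)-suitable core with v ≤ t+1, let k ∈ [v] occur as the first symbol of a row of C exactly t+1−v times, and let j ∈ [v] be a symbol distinct from k. Then there is at least one row of C whose first two symbols are j followed by k. -/

import Mathlib

/-- An `(N,v,t)`-suitable core: an `N × v` array, each of whose rows is a
permutation of `{1,…,v}` (modelled as `Fin v`, with `C i p` the symbol in
position `p` of row `i`), such that for every `s` with `0 ≤ s ≤ t-1`, every
symbol precedes every subset of `s` other symbols in at least `t - s` rows. -/
def IsSuitableCore (N v t : ℕ) (C : Fin N → Equiv.Perm (Fin v)) : Prop :=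
  ∀ s : ℕ, s < t → ∀ σ : Fin v, ∀ S : Finset (Fin v), σ ∉ S → S.card = s →
    t - s ≤ (Finset.univ.filter
      (fun i : Fin N => ∀ τ ∈ S, ((C i).symm σ : ℕ) < ((C i).symm τ : ℕ))).card

/-- In an `(N,v,t)`-suitable core with `v ≤ t + 1`, if `k` starts a row exactly
`t + 1 - v` times and `j ≠ k`, then some row starts with `j` followed by `k`. -/
theorem suitableCore_exists_row_start_pair
    (N v t : ℕ) (hN : 0 < N) (hv : 0 < v) (ht : 0 < t) (hvt : v ≤ t + 1)
    (C : Fin N → Equiv.Perm (Fin v)) (hC : IsSuitableCore N v t C)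
    (k j : Fin v) (hjk : j ≠ k)
    (hk : (Finset.univ.filter (fun i : Fin N => ((C i).symm k : ℕ) = 0)).card = t + 1 - v) :
    ∃ i : Fin N, ((C i).symm j : ℕ) = 0 ∧ ((C i).symm k : ℕ) = 1 := by
  classical
  have hv2 : 2 ≤ v := by
    haveI : Nontrivial (Fin v) := ⟨j, k, hjk⟩
    have := Fintype.one_lt_card (α := Fin v); simp at this; omega
  set S : Finset (Fin v) := Finset.univ \ {k, j} with hSdef
  have hkS : k ∉ S := by simp [hSdef]
  have hScard : S.card = v - 2 := by
    have h2 : ({k, j} : Finset (Fin v)).card = 2 := by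
      rw [Finset.card_insert_of_notMem (by simpa using hjk.symm), Finset.card_singleton]
    rw [hSdef, Finset.card_sdiff_of_subset (Finset.subset_univ _), h2, Finset.card_univ,
      Fintype.card_fin]
  have hs : v - 2 < t := by omega
  have hA := hC (v - 2) hs k S hkS hScard
  set A := Finset.univ.filter
      (fun i : Fin N => ∀ τ ∈ S, ((C i).symm k : ℕ) < ((C i).symm τ : ℕ)) with hAdef
  set B := Finset.univ.filter (fun i : Fin N => ((C i).symm k : ℕ) = 0) with hBdef
  have hBA : B ⊆ A := by
    intro i hi
    simp only [hBdef, hAdef, Finset.mem_filter, Finset.mem_univ, true_and] at hi ⊢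
    intro τ hτ
    have hτk : τ ≠ k := fun h => hkS (h ▸ hτ)
    have h1 : (C i).symm τ ≠ (C i).symm k := fun h => hτk ((C i).symm.injective h)
    have h2 : ((C i).symm τ : ℕ) ≠ ((C i).symm k : ℕ) := fun h => h1 (Fin.ext h)
    omega
  have hcard : B.card < A.card := by
    have hB : B.card = t + 1 - v := hk
    omega
  have hsd : 0 < (A \ B).card := by
    rw [Finset.card_sdiff_of_subset hBA]; omega
  obtain ⟨i, hi⟩ := Finset.card_pos.mp hsd
  obtain ⟨hiA, hiB⟩ := Finset.mem_sdiff.mp hi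
  have hik0 : ((C i).symm k : ℕ) ≠ 0 := by
    simpa [hBdef] using hiB
  have hiA' : ∀ τ ∈ S, ((C i).symm k : ℕ) < ((C i).symm τ : ℕ) := by
    simpa [hAdef] using hiA
  have key : ∀ a : Fin v, ((C i).symm a : ℕ) < ((C i).symm k : ℕ) → a = j := by
    intro a ha
    have hak : a ≠ k := by intro h; subst h; omega
    by_contra haj
    have haS : a ∈ S := by simp [hSdef, hak, haj]
    have := hiA' a haS
    omega
  have e0 : ((C i).symm (C i ⟨0, by omega⟩) : ℕ) = 0 := by simp
  have hk1 : ((C i).symm k : ℕ) = 1 := by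
    by_contra h
    have h2 : 2 ≤ ((C i).symm k : ℕ) := by omega
    have e1 : ((C i).symm (C i ⟨1, by omega⟩) : ℕ) = 1 := by simp
    have j0 : C i ⟨0, by omega⟩ = j := key _ (by rw [e0]; omega)
    have j1 : C i ⟨1, by omega⟩ = j := key _ (by rw [e1]; omega)
    have := (C i).injective (j0.trans j1.symm)
    simp [Fin.ext_iff] at this
  refine ⟨i, ?_, hk1⟩
  have j0 : C i ⟨0, by omega⟩ = j := key _ (by rw [e0]; omega)
  rw [← j0]; simp
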